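/- Let a : ℝ² → ℝ be C¹ with 0 < A ≤ a(p) and |∇a(p)| ≤ A₁ everywhere, and let ε ∈ (0, ε₀) where ε₀ = min{1/2, A²/(2A₁)}. Then for each angle θ ∈ ℝ there is exactly one radius r > 0 such that the point p = (r cos θ, r sin θ) satisfies r·a(p) = ε; moreover this unique r = r_ε(θ) satisfies ε/Ā ≤ r_ε(θ) ≤ ε/A (where Ā is an upper bound for a), and |r_ε(θ) − ε/a(0)| ≤ (A₁/A) · ε²/(a(r_ε(θ),θ)·a(0)). -/

import Mathlib

noncomputable def polarPt (r θ : ℝ) : EuclideanSpace ℝ (Fin 2) :=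
  (WithLp.equiv 2 (Fin 2 → ℝ)).symm ![r * Real.cos θ, r * Real.sin θ]

lemma polarPt_smul (r θ : ℝ) : polarPt r θ = r • polarPt 1 θ := by
  ext i; fin_cases i <;> simp [polarPt]

lemma polarPt_one_norm (θ : ℝ) : ‖polarPt 1 θ‖ = 1 := by
  rw [EuclideanSpace.norm_eq]
  simp [polarPt, Fin.sum_univ_two]

lemma polarPt_sub (r s θ : ℝ) : polarPt r θ - polarPt s θ = (r - s) • polarPt 1 θ := by
  rw [polarPt_smul r, polarPt_smul s, ← sub_smul]

lemma polarPt_norm (r θ : ℝ) : ‖polarPt r θ‖ = |r| := by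
  rw [polarPt_smul, norm_smul, polarPt_one_norm, Real.norm_eq_abs, mul_one]

lemma polarPt_zero (θ : ℝ) : polarPt 0 θ = 0 := by
  rw [polarPt_smul, zero_smul]

theorem stmt_7 (a : EuclideanSpace ℝ (Fin 2) → ℝ) (A Abar A₁ : ℝ)
    (hA : 0 < A) (ha : ContDiff ℝ 1 a)
    (hb : ∀ p, A ≤ a p ∧ a p ≤ Abar)
    (hgr : ∀ p, ‖gradient a p‖ ≤ A₁)
    (ε : ℝ) (hε : 0 < ε) (hε' : ε < min (1/2) (A ^ 2 / (2 * A₁))) :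
    ∀ θ : ℝ,
      (∃! r : ℝ, 0 < r ∧ r * a (polarPt r θ) = ε) ∧
      ∀ r : ℝ, 0 < r → r * a (polarPt r θ) = ε →
        ε / Abar ≤ r ∧ r ≤ ε / A ∧
        |r - ε / a 0| ≤ (A₁ / A) * ε ^ 2 / (a (polarPt r θ) * a 0) := by
  have hA₁0 : 0 ≤ A₁ := le_trans (norm_nonneg _) (hgr 0)
  have hεA : ε < A ^ 2 / (2 * A₁) := lt_of_lt_of_le hε' (min_le_right _ _)
  have hA₁ : 0 < A₁ := by
    rcases hA₁0.lt_or_eq with h | h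
    · exact h
    · exfalso; rw [← h] at hεA; simp at hεA; linarith
  have hεA2 : ε * (2 * A₁) < A ^ 2 := (lt_div_iff₀ (by positivity)).mp hεA
  -- Lipschitz bound for a
  have hlip : ∀ p q, |a p - a q| ≤ A₁ * ‖p - q‖ := by
    intro p q
    have key : ∀ x ∈ (Set.univ : Set (EuclideanSpace ℝ (Fin 2))), ‖fderiv ℝ a x‖ ≤ A₁ := by
      intro x _
      calc ‖fderiv ℝ a x‖ = ‖gradient a x‖ :=
            ((InnerProductSpace.toDual ℝ _).symm.norm_map _).symm
        _ ≤ A₁ := hgr x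
    have := (convex_univ : Convex ℝ (Set.univ : Set (EuclideanSpace ℝ (Fin 2)))).norm_image_sub_le_of_norm_fderiv_le
      (fun x _ => (ha.differentiable one_ne_zero).differentiableAt) key (Set.mem_univ q) (Set.mem_univ p)
    simpa [Real.norm_eq_abs] using this
  have hAbar : 0 < Abar := lt_of_lt_of_le hA (le_trans (hb 0).1 (hb 0).2)
  intro θ
  have hapos : ∀ r, 0 < a (polarPt r θ) := fun r => lt_of_lt_of_le hA (hb _).1
  -- auxiliary: any solution r > 0 satisfies r ≤ ε / A
  have hub : ∀ r : ℝ, 0 < r → r * a (polarPt r θ) = ε → r ≤ ε / A := by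
    intro r hr heq
    rw [le_div_iff₀ hA]
    calc r * A ≤ r * a (polarPt r θ) := by
          exact mul_le_mul_of_nonneg_left (hb _).1 hr.le
      _ = ε := heq
  -- uniqueness helper
  have huniq : ∀ r s : ℝ, 0 < r → r * a (polarPt r θ) = ε → 0 < s →
      s * a (polarPt s θ) = ε → r ≤ s → r = s := by
    intro r s hr hre hs hse hrs
    by_contra hne
    have hlt : r < s := lt_of_le_of_ne hrs hne
    have hnorm : ‖polarPt s θ - polarPt r θ‖ = s - r := by
      rw [polarPt_sub, norm_smul, polarPt_one_norm, mul_one, Real.norm_eq_abs,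
        abs_of_pos (show (0:ℝ) < s - r by linarith)]
    have hd : |a (polarPt s θ) - a (polarPt r θ)| ≤ A₁ * (s - r) := by
      have := hlip (polarPt s θ) (polarPt r θ)
      rwa [hnorm] at this
    have h1 := abs_le.mp hd
    have hrA' : r * A ≤ ε := by
      have := hub r hr hre
      rwa [le_div_iff₀ hA] at this
    have hrA : r * A₁ * 2 < A := by
      nlinarith [mul_le_mul_of_nonneg_right hrA' (by positivity : (0:ℝ) ≤ 2 * A₁)]
    have hAs : A ≤ a (polarPt s θ) := (hb _).1
    have hAr : A ≤ a (polarPt r θ) := (hb _).1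
    nlinarith [mul_le_mul_of_nonneg_left h1.1 hr.le,
      mul_le_mul_of_nonneg_right hAs (show (0:ℝ) ≤ s - r by linarith),
      mul_pos (show (0:ℝ) < s - r by linarith) (show (0:ℝ) < A - r * A₁ by nlinarith)]
  constructor
  · -- existence and uniqueness
    have hcont : Continuous fun r : ℝ => r * a (polarPt r θ) := by
      have : Continuous fun r : ℝ => polarPt r θ := by
        have h2 : (fun r : ℝ => polarPt r θ) = fun r : ℝ => r • polarPt 1 θ :=
          funext fun r => polarPt_smul r θ
        rw [h2]
        exact continuous_id.smul continuous_const
      exact continuous_id.mul (ha.continuous.comp this)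
    have hR : (0:ℝ) ≤ ε / A := by positivity
    have hmem : ε ∈ Set.Icc ((fun r : ℝ => r * a (polarPt r θ)) 0)
        ((fun r : ℝ => r * a (polarPt r θ)) (ε / A)) := by
      constructor
      · show (0:ℝ) * a (polarPt 0 θ) ≤ ε
        rw [zero_mul]; exact hε.le
      · show ε ≤ (ε / A) * a (polarPt (ε/A) θ)
        calc ε = (ε / A) * A := by field_simp
          _ ≤ (ε / A) * a (polarPt (ε/A) θ) :=
            mul_le_mul_of_nonneg_left (hb _).1 hR
    obtain ⟨r, hrmem, hre⟩ := intermediate_value_Icc hR hcont.continuousOn hmem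
    have hr0 : 0 < r := by
      rcases hrmem.1.lt_or_eq with h | h
      · exact h
      · exfalso
        rw [← h] at hre
        simp only [zero_mul] at hre
        linarith
    refine ⟨r, ⟨hr0, hre⟩, ?_⟩
    rintro s ⟨hs0, hse⟩
    rcases le_total s r with h | h
    · exact huniq s r hs0 hse hr0 hre h
    · exact (huniq r s hr0 hre hs0 hse h).symm
  · intro r hr heq
    refine ⟨?_, hub r hr heq, ?_⟩
    · rw [div_le_iff₀ hAbar]
      calc ε = r * a (polarPt r θ) := heq.symm
        _ ≤ r * Abar := mul_le_mul_of_nonneg_left (hb _).2 hr.le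
    · set b := a (polarPt r θ) with hbdef
      set c := a 0 with hcdef
      have hbA : A ≤ b := (hb _).1
      have hcA : A ≤ c := (hb _).1
      have hb0 : 0 < b := lt_of_lt_of_le hA hbA
      have hc0 : 0 < c := lt_of_lt_of_le hA hcA
      have hcb : |c - b| ≤ A₁ * r := by
        have := hlip 0 (polarPt r θ)
        rwa [zero_sub, norm_neg, polarPt_norm, abs_of_pos hr] at this
      have hrb : r * b = ε := heq
      have hrub : r * A ≤ ε := by
        have := hub r hr heq
        rwa [le_div_iff₀ hA] at this
      have heq2 : r - ε / c = r * (c - b) / c := by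
        field_simp
        nlinarith [hrb]
      rw [heq2, abs_div, abs_of_pos hc0, abs_mul, abs_of_pos hr,
        div_le_div_iff₀ hc0 (by positivity : (0:ℝ) < b * c)]
      have e1 : r * |c - b| * b * A ≤ r * (A₁ * r) * b * A := by
        nlinarith [mul_le_mul_of_nonneg_right hcb (by positivity : (0:ℝ) ≤ r * b * A)]
      have e2 : r * (A₁ * r) * b * A = A₁ * ε * (r * A) := by rw [← hrb]; ring
      have e3 : A₁ * ε * (r * A) ≤ A₁ * ε * ε :=
        mul_le_mul_of_nonneg_left hrub (by positivity)
      have hstepA : r * |c - b| * b * A ≤ A₁ * ε ^ 2 := by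
        calc r * |c - b| * b * A ≤ r * (A₁ * r) * b * A := e1
          _ = A₁ * ε * (r * A) := e2
          _ ≤ A₁ * ε * ε := e3
          _ = A₁ * ε ^ 2 := by ring
      have hstep : r * |c - b| * b ≤ A₁ / A * ε ^ 2 := by
        rw [show A₁ / A * ε ^ 2 = A₁ * ε ^ 2 / A by ring, le_div_iff₀ hA]
        exact hstepA
      calc r * |c - b| * (b * c) = (r * |c - b| * b) * c := by ring
        _ ≤ (A₁ / A * ε ^ 2) * c := mul_le_mul_of_nonneg_right hstep hc0.le
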